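/- arXiv:1507.05609 — 3 statements merged into one kernel-verified Lean document; each statement's English description precedes it below -/
import Mathlib

section
/- Let ξ ∈ ℝⁿ and p_b be a strictly positive probability vector, and define the log-moment-generating function φ_ξ(β) = log Σⱼ p_{b,j} e^{β ξⱼ}. Let M = argminⱼ ξⱼ. Then as β → −∞, the function g(β) := β φ_ξ'(β) − φ_ξ(β) converges to −log Σ_{j∈M} p_{b,j}; moreover g(0) = 0, so if η < −log Σ_{j∈M} p_{b,j} and the ξⱼ are not all equal, there exists β < 0 with g(β) = η. -/
open Finset Real Filter

/-- Behavior of `g(β) = β φ'_ξ(β) − φ_ξ(β)` for the log-moment-generating function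
`φ_ξ(β) = log Σⱼ p_{b,j} e^{βξⱼ}`: as `β → −∞`, `g(β) → −log Σ_{j∈M} p_{b,j}` where `M` is the
argmin set of `ξ`; also `g(0) = 0`, so for any `η` strictly between these values (and `ξ` not
constant) there is a negative root `g(β) = η`. -/
theorem log_mgf_root_existence
    {n : ℕ} (hn : 0 < n) (ξ : Fin n → ℝ) (pb : Fin n → ℝ)
    (hpb_pos : ∀ j, 0 < pb j) (hpb_sum : ∑ j, pb j = 1)
    (φξ : ℝ → ℝ)
    (hφξ : ∀ β, φξ β = Real.log (∑ j, pb j * Real.exp (β * ξ j)))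
    (g : ℝ → ℝ) (hg : ∀ β, g β = β * deriv φξ β - φξ β)
    (M : Finset (Fin n))
    (hMdef : ∀ j, j ∈ M ↔ ∀ j', ξ j ≤ ξ j') :
    Tendsto g atBot (nhds (-Real.log (∑ j ∈ M, pb j))) ∧
    g 0 = 0 ∧
    (∀ η : ℝ, η < -Real.log (∑ j ∈ M, pb j) → 0 < η →
      (¬ ∀ j j' : Fin n, ξ j = ξ j') →
      ∃ β : ℝ, β < 0 ∧ g β = η) := by
  classical
  have hne : Nonempty (Fin n) := ⟨⟨0, hn⟩⟩
  obtain ⟨j0, hj0⟩ := Finite.exists_min ξ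
  set m := ξ j0 with hm
  have hMmem : ∀ j, j ∈ M ↔ ξ j = m := by
    intro j
    rw [hMdef]
    constructor
    · intro h; exact le_antisymm (h j0) (hj0 j)
    · intro h j'; rw [h]; exact hj0 j'
  set Q : ℝ := ∑ j ∈ M, pb j with hQ
  have hQpos : 0 < Q :=
    Finset.sum_pos (fun j _ => hpb_pos j) ⟨j0, (hMmem j0).2 rfl⟩
  set S : ℝ → ℝ := fun β => ∑ j, pb j * Real.exp (β * ξ j) with hSdef
  set S' : ℝ → ℝ := fun β => ∑ j, pb j * ξ j * Real.exp (β * ξ j) with hS'def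
  have hSpos : ∀ β, 0 < S β := fun β =>
    Finset.sum_pos (fun j _ => mul_pos (hpb_pos j) (Real.exp_pos _)) Finset.univ_nonempty
  have hSderiv : ∀ β, HasDerivAt S (S' β) β := by
    intro β
    have h : HasDerivAt S (∑ j : Fin n, pb j * (Real.exp (β * ξ j) * (1 * ξ j))) β :=
      HasDerivAt.fun_sum fun j _ => (((hasDerivAt_id β).mul_const (ξ j)).exp).const_mul (pb j)
    convert h using 1
    apply Finset.sum_congr rfl
    intros; ring
  have hφeq : φξ = fun β => Real.log (S β) := funext hφξ
  have hφderiv : ∀ β, deriv φξ β = S' β / S β := by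
    intro β
    rw [hφeq]
    exact ((hSderiv β).log (hSpos β).ne').deriv
  have hgid : ∀ β, g β = β * (S' β / S β) - Real.log (S β) := by
    intro β; rw [hg, hφderiv, hφξ]
  -- shifted quantities
  set T : ℝ → ℝ := fun β => ∑ j, pb j * Real.exp (β * (ξ j - m)) with hTdef
  set N : ℝ → ℝ := fun β => ∑ j, pb j * (β * (ξ j - m)) * Real.exp (β * (ξ j - m)) with hNdef
  have hTpos : ∀ β, 0 < T β := fun β =>
    Finset.sum_pos (fun j _ => mul_pos (hpb_pos j) (Real.exp_pos _)) Finset.univ_nonempty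
  have hST : ∀ β, S β = Real.exp (β * m) * T β := by
    intro β
    rw [hTdef, Finset.mul_sum]
    apply Finset.sum_congr rfl
    intro j _
    rw [show β * ξ j = β * m + β * (ξ j - m) by ring, Real.exp_add]
    ring
  have hS'T : ∀ β, S' β = Real.exp (β * m) * ∑ j, pb j * ξ j * Real.exp (β * (ξ j - m)) := by
    intro β
    rw [Finset.mul_sum]
    apply Finset.sum_congr rfl
    intro j _
    rw [show β * ξ j = β * m + β * (ξ j - m) by ring, Real.exp_add]
    ring
  have hident : ∀ β, g β = N β / T β - Real.log (T β) := by
    intro β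
    set U : ℝ := ∑ j, pb j * ξ j * Real.exp (β * (ξ j - m)) with hU
    have hNU : N β = β * U - β * m * T β := by
      rw [hNdef, hU, hTdef, Finset.mul_sum, Finset.mul_sum, ← Finset.sum_sub_distrib]
      apply Finset.sum_congr rfl
      intro j _
      ring
    have hlogS : Real.log (S β) = β * m + Real.log (T β) := by
      rw [hST β, Real.log_mul (Real.exp_ne_zero _) (hTpos β).ne', Real.log_exp]
    have hfrac : β * (S' β / S β) = β * U / T β := by
      rw [hS'T β, hST β, ← hU]
      rw [mul_div_mul_left _ _ (Real.exp_ne_zero _)]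
      ring
    rw [hgid, hfrac, hlogS, hNU, sub_div, mul_div_assoc, mul_div_assoc, div_self (hTpos β).ne', mul_one]
    ring
  -- limits
  have hTlim : Tendsto T atBot (nhds Q) := by
    have h : Tendsto T atBot
        (nhds (∑ j : Fin n, if j ∈ M then pb j else 0)) := by
      apply tendsto_finset_sum
      intro j _
      by_cases hjM : j ∈ M
      · have hc : ξ j - m = 0 := by rw [(hMmem j).1 hjM]; ring
        simp only [hjM, if_true, hc, mul_zero, Real.exp_zero, mul_one]
        exact tendsto_const_nhds
      · have hc : 0 < ξ j - m := by
          have := hj0 j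
          rcases lt_or_eq_of_le this with h' | h'
          · linarith
          · exact absurd ((hMmem j).2 h'.symm) hjM
        simp only [hjM, if_false]
        have h1 : Tendsto (fun β : ℝ => β * (ξ j - m)) atBot atBot :=
          tendsto_id.atBot_mul_const hc
        have h2 := Real.tendsto_exp_atBot.comp h1
        have := h2.const_mul (pb j)
        simpa using this
    have : (∑ j : Fin n, if j ∈ M then pb j else 0) = Q := by
      rw [hQ, Finset.sum_ite_mem, Finset.univ_inter]
    rwa [this] at h
  have hxex : Tendsto (fun x : ℝ => x * Real.exp x) atBot (nhds 0) := by
    have h := Real.tendsto_pow_mul_exp_neg_atTop_nhds_zero 1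
    have h2 : Tendsto (fun β : ℝ => -β) atBot atTop := tendsto_neg_atBot_atTop
    have := (h.comp h2).neg
    simpa using this
  have hNlim : Tendsto N atBot (nhds 0) := by
    have h : Tendsto N atBot (nhds (∑ _j : Fin n, (0 : ℝ))) := by
      apply tendsto_finset_sum
      intro j _
      by_cases hjM : ξ j - m = 0
      · simp only [hjM, mul_zero, Real.exp_zero, mul_one, zero_mul]
        simpa [hjM] using (tendsto_const_nhds :
          Tendsto (fun _ : ℝ => (0 : ℝ)) atBot (nhds 0))
      · have hc : 0 < ξ j - m := lt_of_le_of_ne (by linarith [hj0 j]) (Ne.symm hjM)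
        have h1 : Tendsto (fun β : ℝ => β * (ξ j - m)) atBot atBot :=
          tendsto_id.atBot_mul_const hc
        have h2 := hxex.comp h1
        have h3 := h2.const_mul (pb j)
        simp only [Function.comp] at h2 h3
        have : (fun β : ℝ => pb j * (β * (ξ j - m)) * Real.exp (β * (ξ j - m)))
            = fun β : ℝ => pb j * (β * (ξ j - m) * Real.exp (β * (ξ j - m))) := by
          funext β; ring
        rw [this]
        simpa using h3
    simpa using h
  have htends : Tendsto g atBot (nhds (-Real.log Q)) := by
    have h : Tendsto (fun β => N β / T β - Real.log (T β)) atBot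
        (nhds (0 / Q - Real.log Q)) :=
      (hNlim.div hTlim hQpos.ne').sub (hTlim.log hQpos.ne')
    have heq : (0 : ℝ) / Q - Real.log Q = -Real.log Q := by ring
    rw [heq] at h
    exact h.congr fun β => (hident β).symm
  have hg0 : g 0 = 0 := by
    have hS0 : S 0 = 1 := by
      rw [hSdef]
      simp [hpb_sum]
    rw [hgid, hS0]
    simp
  refine ⟨htends, hg0, ?_⟩
  intro η hηlt hηpos _
  -- continuity of g
  have hScont : Continuous S := by
    apply continuous_finset_sum
    intro j _
    exact continuous_const.mul ((continuous_id.mul continuous_const).rexp)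
  have hS'cont : Continuous S' := by
    apply continuous_finset_sum
    intro j _
    exact continuous_const.mul ((continuous_id.mul continuous_const).rexp)
  have hgcont : Continuous g := by
    have h : Continuous fun β => β * (S' β / S β) - Real.log (S β) :=
      (continuous_id.mul (hS'cont.div hScont fun β => (hSpos β).ne')).sub
        (hScont.log fun β => (hSpos β).ne')
    exact h.congr fun β => (hgid β).symm
  -- find β₀ < 0 with g β₀ > η
  have hev : ∀ᶠ β in atBot, η < g β := htends.eventually (lt_mem_nhds hηlt)
  obtain ⟨β₀, hβ₀gt, hβ₀neg⟩ := (hev.and (eventually_lt_atBot 0)).exists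
  -- IVT on [β₀, 0]
  have hsub : Set.Icc (g 0) (g β₀) ⊆ g '' Set.Icc β₀ 0 :=
    intermediate_value_Icc' hβ₀neg.le hgcont.continuousOn
  have hηmem : η ∈ Set.Icc (g 0) (g β₀) := by
    rw [hg0]
    exact ⟨hηpos.le, hβ₀gt.le⟩
  obtain ⟨β, hβmem, hβeq⟩ := hsub hηmem
  refine ⟨β, ?_, hβeq⟩
  rcases lt_or_eq_of_le hβmem.2 with h | h
  · exact h
  · exfalso
    rw [h, hg0] at hβeq
    exact hηpos.ne hβeq
end

section
/- For ω ∈ [0,1), ρ > 1 and ζ > 0, the function f(a, β) = min{a(1−ω), (β − ρa − ζ − 2)/2, 1} / (β + 1) over a > 0, β > 0 is maximized at a = 1/(1−ω), β = ρ/(1−ω) + ζ + 4, with maximum value 1/(ρ/(1−ω) + ζ + 5). -/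
/-- Optimal tuning of step-size and sample-size parameters (Lemma: index max):
`f(a,β) = min{a(1−ω), (β − ρa − ζ − 2)/2, 1}/(β+1)` over `a, β > 0` is maximized at
`a = 1/(1−ω)`, `β = ρ/(1−ω) + ζ + 4`, with maximum value `1/(ρ/(1−ω) + ζ + 5)`. -/
theorem rate_exponent_maximizer
    (ω ρ ζ : ℝ) (hω0 : 0 ≤ ω) (hω1 : ω < 1) (hρ : 1 < ρ) (hζ : 0 < ζ)
    (f : ℝ → ℝ → ℝ)
    (hf : ∀ a β, f a β =
      min (min (a * (1 - ω)) ((β - ρ * a - ζ - 2) / 2)) 1 / (β + 1)) :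
    (∀ a β : ℝ, 0 < a → 0 < β → f a β ≤ 1 / (ρ / (1 - ω) + ζ + 5)) ∧
    f (1 / (1 - ω)) (ρ / (1 - ω) + ζ + 4) = 1 / (ρ / (1 - ω) + ζ + 5) := by
  have h1 : (0:ℝ) < 1 - ω := by linarith
  have hρω : 0 < ρ / (1 - ω) := div_pos (by linarith) h1
  have hD : 0 < ρ / (1 - ω) + ζ + 5 := by linarith
  constructor
  · intro a β ha hβ
    rw [hf]
    set m := min (min (a * (1 - ω)) ((β - ρ * a - ζ - 2) / 2)) 1 with hm
    rcases le_or_gt m 0 with h | h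
    · have h0 : m / (β + 1) ≤ 0 := div_nonpos_of_nonpos_of_nonneg h (by linarith)
      have : (0:ℝ) ≤ 1 / (ρ / (1 - ω) + ζ + 5) := le_of_lt (by positivity)
      linarith
    · have hma : m ≤ a * (1 - ω) := le_trans (min_le_left _ _) (min_le_left _ _)
      have hmb : m ≤ (β - ρ * a - ζ - 2) / 2 :=
        le_trans (min_le_left _ _) (min_le_right _ _)
      have hm1 : m ≤ 1 := min_le_right _ _
      have haa : m / (1 - ω) ≤ a := (div_le_iff₀ h1).mpr hma
      have h3 : ρ * (m / (1 - ω)) ≤ ρ * a :=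
        mul_le_mul_of_nonneg_left haa (by linarith)
      have h4 : ρ * (m / (1 - ω)) = m * (ρ / (1 - ω)) := by ring
      have key : m * (ρ / (1 - ω) + ζ + 5) ≤ β + 1 := by nlinarith
      rw [div_le_div_iff₀ (by linarith) hD]
      linarith
  · rw [hf]
    have ha : (1 / (1 - ω)) * (1 - ω) = 1 := by field_simp
    have hb : ((ρ / (1 - ω) + ζ + 4) - ρ * (1 / (1 - ω)) - ζ - 2) / 2 = 1 := by
      field_simp
      ring
    rw [ha, hb]
    simp
    ring
end

section
/- For ω ∈ [0,1), ρ > 1 and ζ > 0, the function f(a, β) = min{a(1−ω), β − ρa − ζ − 1, 1} / (β + 1) over a > 0, β > 0 is maximized at a = 1/(1−ω), β = ρ/(1−ω) + ζ + 2, with maximum value 1/(ρ/(1−ω) + ζ + 3). -/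
/-- Optimal tuning under the relaxed Lipschitz assumption (Lemma: index max1):
`f(a,β) = min{a(1−ω), β − ρa − ζ − 1, 1}/(β+1)` over `a, β > 0` is maximized at
`a = 1/(1−ω)`, `β = ρ/(1−ω) + ζ + 2`, with maximum value `1/(ρ/(1−ω) + ζ + 3)`. -/
theorem rate_exponent_maximizer_relaxed
    (ω ρ ζ : ℝ) (hω0 : 0 ≤ ω) (hω1 : ω < 1) (hρ : 1 < ρ) (hζ : 0 < ζ)
    (f : ℝ → ℝ → ℝ)
    (hf : ∀ a β, f a β =
      min (min (a * (1 - ω)) (β - ρ * a - ζ - 1)) 1 / (β + 1)) :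
    (∀ a β : ℝ, 0 < a → 0 < β → f a β ≤ 1 / (ρ / (1 - ω) + ζ + 3)) ∧
    f (1 / (1 - ω)) (ρ / (1 - ω) + ζ + 2) = 1 / (ρ / (1 - ω) + ζ + 3) := by
  have h1ω : (0:ℝ) < 1 - ω := by linarith
  have hD : (0:ℝ) < ρ / (1 - ω) + ζ + 3 := by
    have : 0 < ρ / (1 - ω) := div_pos (by linarith) h1ω
    linarith
  constructor
  · intro a β ha hβ
    rw [hf]
    set m := min (min (a * (1 - ω)) (β - ρ * a - ζ - 1)) 1 with hm
    have hm1 : m ≤ 1 := min_le_right _ _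
    have hma : m ≤ a * (1 - ω) := le_trans (min_le_left _ _) (min_le_left _ _)
    have hmb : m ≤ β - ρ * a - ζ - 1 := le_trans (min_le_left _ _) (min_le_right _ _)
    have hβ1 : (0:ℝ) < β + 1 := by linarith
    rcases le_or_gt m 0 with hm0 | hm0
    · have : m / (β + 1) ≤ 0 := div_nonpos_of_nonpos_of_nonneg hm0 hβ1.le
      exact this.trans (le_of_lt (by positivity))
    · rw [div_le_div_iff₀ hβ1 hD]
      have haM : m / (1 - ω) ≤ a := (div_le_iff₀ h1ω).2 (by linarith [hma])
      have hρa : ρ * (m / (1 - ω)) ≤ ρ * a :=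
        mul_le_mul_of_nonneg_left haM (by linarith)
      have hρm : ρ * (m / (1 - ω)) = m * (ρ / (1 - ω)) := by ring
      -- β + 1 ≥ m + ρ m/(1-ω) + ζ + 2 ≥ m (ρ/(1-ω) + ζ + 3)
      have hmz : m * (ζ + 2) ≤ ζ + 2 := by nlinarith
      nlinarith [hρa, hρm, hmb, hmz]
  · rw [hf]
    have ha1 : (1 / (1 - ω)) * (1 - ω) = 1 := by field_simp
    have ha2 : ρ / (1 - ω) + ζ + 2 - ρ * (1 / (1 - ω)) - ζ - 1 = 1 := by
      field_simp; ring
    rw [ha1, ha2, min_self, min_self]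
    ring
end
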